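/- For every even integer n ≥ 4, there exists a 2-correspondence assignment C for the cycle graph on n vertices such that the cycle graph has no C-coloring. (Hence, although even cycles are 2-choosable, their correspondence chromatic number is 3.) -/

import Mathlib

/-- A `k`-correspondence assignment for a graph `G`: to each ordered pair of adjacent
vertices it assigns a partial injective function (partial equivalence) on colors
`Fin k`, such that `C_{vu}` is the inverse of `C_{uv}`. -/
structure CorrAssign {V : Type*} (G : SimpleGraph V) (k : ℕ) where
  corr : V → V → (Fin k) ≃. (Fin k)
  corr_symm : ∀ u v, G.Adj u v → corr v u = (corr u v).symm

namespace CorrAssign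

variable {V : Type*} {G : SimpleGraph V} {k : ℕ}

/-- A `C`-coloring of `G`. -/
def IsColoring (C : CorrAssign G k) (f : V → Fin k) : Prop :=
  ∀ u v, G.Adj u v → C.corr u v (f u) ≠ some (f v)

/-- `G` is `C`-colorable. -/
def Colorable (C : CorrAssign G k) : Prop := ∃ f, C.IsColoring f

/-- The composed correspondence along a walk. -/
def walkCorr (C : CorrAssign G k) : {u v : V} → G.Walk u v → (Fin k) ≃. (Fin k)
  | _, _, SimpleGraph.Walk.nil => PEquiv.refl _
  | _, _, @SimpleGraph.Walk.cons _ _ a b _ _h p => (C.corr a b).trans (C.walkCorr p)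

/-- `C` is consistent on a closed walk `W`. -/
def ConsistentOn (C : CorrAssign G k) {u : V} (W : G.Walk u u) : Prop :=
  ∀ c c' : Fin k, C.walkCorr W c = some c' → c' = c

/-- `C` is consistent. -/
def Consistent (C : CorrAssign G k) : Prop :=
  ∀ (u : V) (W : G.Walk u u), C.ConsistentOn W

end CorrAssign

/-- `G` is `k`-choosable: any assignment of lists of `k` colors admits a proper coloring
from the lists. -/
def Choosable {V : Type*} (G : SimpleGraph V) (k : ℕ) : Prop :=
  ∀ L : V → Finset ℕ, (∀ v, (L v).card = k) →
    ∃ φ : V → ℕ, (∀ v, φ v ∈ L v) ∧ ∀ u v, G.Adj u v → φ u ≠ φ v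

/-- For every even `n ≥ 4` there is a `2`-correspondence assignment `C` of the cycle on
`n` vertices admitting no `C`-coloring: even cycles are `2`-choosable, but their
correspondence chromatic number is `3`. -/
private def twpe : Fin 2 ≃. Fin 2 where
  toFun x := some (x + 1)
  invFun x := some (x + 1)
  inv := by decide

open Fin.NatCast

theorem cycleGraph_not_corr_two_colorable (n : ℕ) (hn : 4 ≤ n) (heven : Even n) :
    ∃ C : CorrAssign (SimpleGraph.cycleGraph n) 2, ¬ C.Colorable := by
  classical
  set P : Fin n → Fin n → Prop := fun u v =>
    (u.val = 0 ∧ v.val = n - 1) ∨ (u.val = n - 1 ∧ v.val = 0) with hP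
  refine ⟨⟨fun u v => if P u v then twpe else PEquiv.refl _, ?_⟩, ?_⟩
  · intro u v _
    by_cases h : P u v
    · have h' : P v u := by simp only [hP] at h ⊢; tauto
      simp only [if_pos h, if_pos h']
      rfl
    · have h' : ¬ P v u := by simp only [hP] at h ⊢; tauto
      simp [h, h', PEquiv.symm_refl]
  · rintro ⟨f, hf⟩
    -- identity edges
    have step : ∀ i (h : i + 1 < n),
        f ⟨i + 1, h⟩ = f ⟨i, Nat.lt_of_succ_lt h⟩ + 1 := by
      intro i h
      have hadj : (SimpleGraph.cycleGraph n).Adj ⟨i, Nat.lt_of_succ_lt h⟩ ⟨i + 1, h⟩ := by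
        rw [SimpleGraph.cycleGraph_adj']
        right
        have : ((⟨i + 1, h⟩ : Fin n) - ⟨i, Nat.lt_of_succ_lt h⟩).val
            = (n - i + (i + 1)) % n := by
          simp [Fin.sub_def]
        rw [this, show n - i + (i + 1) = n + 1 by omega, Nat.add_mod_left,
          Nat.mod_eq_of_lt (by omega)]
      have hc := hf _ _ hadj
      have hnp : ¬ P ⟨i, Nat.lt_of_succ_lt h⟩ ⟨i + 1, h⟩ := by
        simp only [hP]; omega
      simp only [if_neg hnp, PEquiv.refl_apply, ne_eq, Option.some.injEq] at hc
      revert hc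
      generalize f ⟨i + 1, h⟩ = a
      generalize f ⟨i, Nat.lt_of_succ_lt h⟩ = b
      revert a b; decide
    -- the twisted edge
    have h0 : (0 : ℕ) < n := by omega
    have hn1 : n - 1 < n := by omega
    have hadj : (SimpleGraph.cycleGraph n).Adj ⟨0, h0⟩ ⟨n - 1, hn1⟩ := by
      rw [SimpleGraph.cycleGraph_adj']
      left
      have : ((⟨0, h0⟩ : Fin n) - ⟨n - 1, hn1⟩).val = (0 + (n - (n - 1))) % n := by
        simp [Fin.sub_def]
      rw [this, show 0 + (n - (n - 1)) = 1 by omega, Nat.mod_eq_of_lt (by omega)]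
    have hc := hf _ _ hadj
    have hp : P ⟨0, h0⟩ ⟨n - 1, hn1⟩ := Or.inl ⟨rfl, rfl⟩
    simp only [if_pos hp] at hc
    have htw : f ⟨n - 1, hn1⟩ = f ⟨0, h0⟩ := by
      have hc' : f ⟨0, h0⟩ + 1 ≠ f ⟨n - 1, hn1⟩ := by
        intro he; exact hc (by simpa [twpe] using congrArg some he)
      revert hc'
      generalize f ⟨n - 1, hn1⟩ = a
      generalize f ⟨0, h0⟩ = b
      revert a b; decide
    -- propagate
    have key : ∀ i (h : i < n), f ⟨i, h⟩ = f ⟨0, h0⟩ + (i : Fin 2) := by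
      intro i
      induction i with
      | zero => intro h; simp
      | succ i ih =>
        intro h
        rw [step i h, ih (Nat.lt_of_succ_lt h)]
        push_cast
        rw [add_assoc]
    have := key (n - 1) hn1
    rw [htw] at this
    have hcast : ((n - 1 : ℕ) : Fin 2) = 0 := by
      have h2 : f ⟨0, h0⟩ + ((n - 1 : ℕ) : Fin 2) = f ⟨0, h0⟩ + 0 := by
        rw [add_zero]; exact this.symm
      exact add_left_cancel h2
    have hval : ((n - 1 : ℕ) : Fin 2).val = (n - 1) % 2 := by
      simp [Fin.val_natCast]
    obtain ⟨m, rfl⟩ := heven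
    rw [hcast] at hval
    simp at hval
    omega
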